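/- Let ℓ, μ, γ > 0, set δ = ℓ/(μ + ℓ), and let 0 < ε < √(γ/(μ·ℓ)). Then the symmetric 2×2 real matrix Λ = [[−(1 − δ), (ε/2)(ℓ(1 − δ) + μδ)], [(ε/2)(ℓ(1 − δ) + μδ), −γδ]] is negative definite. -/

import Mathlib

open Matrix

/-- Negative definiteness of the 2×2 matrix `Λ` appearing in the LaSalle
argument, for `δ = ℓ/(μ + ℓ)` and gain `0 < ε < √(γ/(μℓ))`. -/
theorem lasalle_matrix_neg_def
    (ℓ μ γ ε : ℝ) (hℓ : 0 < ℓ) (hμ : 0 < μ) (hγ : 0 < γ)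
    (hε0 : 0 < ε) (hε : ε < Real.sqrt (γ / (μ * ℓ))) :
    letI δ : ℝ := ℓ / (μ + ℓ)
    letI Λ : Matrix (Fin 2) (Fin 2) ℝ :=
      !![-(1 - δ), (ε / 2) * (ℓ * (1 - δ) + μ * δ);
         (ε / 2) * (ℓ * (1 - δ) + μ * δ), -(γ * δ)]
    Λ.IsSymm ∧ ∀ x : Fin 2 → ℝ, x ≠ 0 → x ⬝ᵥ Λ.mulVec x < 0 := by
  set δ : ℝ := ℓ / (μ + ℓ) with hδ
  set Λ : Matrix (Fin 2) (Fin 2) ℝ :=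
      !![-(1 - δ), (ε / 2) * (ℓ * (1 - δ) + μ * δ);
         (ε / 2) * (ℓ * (1 - δ) + μ * δ), -(γ * δ)] with hΛ
  have hs : 0 < μ + ℓ := by linarith
  have hε2 : ε ^ 2 * (μ * ℓ) < γ := by
    have h1 : ε ^ 2 < γ / (μ * ℓ) := by
      have := (Real.lt_sqrt hε0.le).mp hε
      linarith
    have hml : 0 < μ * ℓ := mul_pos hμ hℓ
    calc ε ^ 2 * (μ * ℓ) < γ / (μ * ℓ) * (μ * ℓ) := by
          exact mul_lt_mul_of_pos_right h1 hml
      _ = γ := div_mul_cancel₀ _ hml.ne'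
  constructor
  · show Λᵀ = Λ
    ext i j
    fin_cases i <;> fin_cases j <;> simp [Λ]
  · intro x hx
    have hx' : x 0 ≠ 0 ∨ x 1 ≠ 0 := by
      by_contra h
      push_neg at h
      apply hx
      ext i
      fin_cases i <;> simp [h.1, h.2]
    have hquad : x ⬝ᵥ Λ.mulVec x =
        -(1 - δ) * (x 0) ^ 2 + 2 * ((ε / 2) * (ℓ * (1 - δ) + μ * δ)) * x 0 * x 1
          - γ * δ * (x 1) ^ 2 := by
      simp [Λ, Matrix.mulVec, dotProduct, Fin.sum_univ_two, Matrix.vecHead, Matrix.vecTail]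
      ring
    rw [hquad]
    have h1δ : 1 - δ = μ / (μ + ℓ) := by
      rw [hδ, eq_div_iff hs.ne', sub_mul, div_mul_cancel₀ _ hs.ne']; ring
    have hδpos : 0 < δ := div_pos hℓ hs
    have h1δpos : 0 < 1 - δ := by rw [h1δ]; positivity
    -- det condition: (1-δ)*(γ*δ) > b² where b = (ε/2)*(ℓ(1-δ)+μδ)
    have hb : (ε / 2) * (ℓ * (1 - δ) + μ * δ) = ε * (μ * ℓ) / (μ + ℓ) := by
      rw [h1δ, hδ]; field_simp; ring
    have hdet : ((ε / 2) * (ℓ * (1 - δ) + μ * δ)) ^ 2 < (1 - δ) * (γ * δ) := by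
      rw [hb, h1δ, hδ]
      rw [div_pow, div_lt_iff₀ (by positivity)]
      have : μ / (μ + ℓ) * (γ * (ℓ / (μ + ℓ))) * (μ + ℓ) ^ 2
          = γ * (μ * ℓ) := by field_simp
      rw [this]
      have hml : 0 < μ * ℓ := mul_pos hμ hℓ
      calc (ε * (μ * ℓ)) ^ 2 = ε ^ 2 * (μ * ℓ) * (μ * ℓ) := by ring
        _ < γ * (μ * ℓ) := mul_lt_mul_of_pos_right hε2 hml
    set a := 1 - δ with ha
    set b := (ε / 2) * (ℓ * (1 - δ) + μ * δ) with hbdef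
    set c := γ * δ with hc
    have hcpos : 0 < c := mul_pos hγ hδpos
    rcases hx' with h | h
    · nlinarith [sq_nonneg (c * x 1 - b * x 0), sq_nonneg (x 1),
        mul_pos (sub_pos.mpr hdet) (pow_pos (abs_pos.mpr h) 2), sq_abs (x 0), hcpos]
    · nlinarith [sq_nonneg (a * x 0 - b * x 1), sq_nonneg (x 0),
        mul_pos (sub_pos.mpr hdet) (pow_pos (abs_pos.mpr h) 2), sq_abs (x 1), h1δpos]
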